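/- The second derivative of Γ satisfies Γ''(x) ≥ 8/(u-ℓ)² for every x in the open interval (ℓ, u). Consequently, Γ is strictly convex on (ℓ, u) and has a unique minimizer x* ∈ (ℓ, u). -/

import Mathlib

open Set

private lemma stmt7_hasDerivAt (xL xR Δ x : ℝ) (h1 : x - xL ≠ 0) (h2 : xR - x ≠ 0)
    (h3 : Δ + x ≠ 0) (h4 : Δ - x ≠ 0) :
    HasDerivAt (fun x => -Real.log (x - xL) - Real.log (xR - x)
      - Real.log (Δ + x) - Real.log (Δ - x))
      (-(x - xL)⁻¹ + (xR - x)⁻¹ - (Δ + x)⁻¹ + (Δ - x)⁻¹) x := by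
  have d1 : HasDerivAt (fun y : ℝ => Real.log (y - xL)) (1 / (x - xL)) x :=
    ((hasDerivAt_id x).sub_const xL).log h1
  have d2 : HasDerivAt (fun y : ℝ => Real.log (xR - y)) ((-1) / (xR - x)) x :=
    ((hasDerivAt_id x).const_sub xR).log h2
  have d3 : HasDerivAt (fun y : ℝ => Real.log (Δ + y)) (1 / (Δ + x)) x :=
    ((hasDerivAt_id x).const_add Δ).log h3
  have d4 : HasDerivAt (fun y : ℝ => Real.log (Δ - y)) ((-1) / (Δ - x)) x :=
    ((hasDerivAt_id x).const_sub Δ).log h4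
  have := ((d1.neg.sub d2).sub d3).sub d4
  refine this.congr_deriv ?_
  simp only [one_div, neg_div]
  ring

private lemma stmt7_hasDerivAt2 (xL xR Δ x : ℝ) (h1 : x - xL ≠ 0) (h2 : xR - x ≠ 0)
    (h3 : Δ + x ≠ 0) (h4 : Δ - x ≠ 0) :
    HasDerivAt (fun x => -(x - xL)⁻¹ + (xR - x)⁻¹ - (Δ + x)⁻¹ + (Δ - x)⁻¹)
      (((x - xL) ^ 2)⁻¹ + ((xR - x) ^ 2)⁻¹ + ((Δ + x) ^ 2)⁻¹ + ((Δ - x) ^ 2)⁻¹) x := by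
  have d1 : HasDerivAt (fun y : ℝ => (y - xL)⁻¹) (-1 / (x - xL) ^ 2) x :=
    ((hasDerivAt_id x).sub_const xL).inv h1
  have d2 : HasDerivAt (fun y : ℝ => (xR - y)⁻¹) (-(-1) / (xR - x) ^ 2) x :=
    ((hasDerivAt_id x).const_sub xR).inv h2
  have d3 : HasDerivAt (fun y : ℝ => (Δ + y)⁻¹) (-1 / (Δ + x) ^ 2) x :=
    ((hasDerivAt_id x).const_add Δ).inv h3
  have d4 : HasDerivAt (fun y : ℝ => (Δ - y)⁻¹) (-(-1) / (Δ - x) ^ 2) x :=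
    ((hasDerivAt_id x).const_sub Δ).inv h4
  have := ((d1.neg.add d2).sub d3).add d4
  refine this.congr_deriv ?_
  simp only [neg_div, one_div, neg_neg]
  ring

/-- `Γ''(x) ≥ 8/(u-ℓ)²` on `(ℓ, u)`; consequently `Γ` is strictly convex on
`(ℓ, u)` and has a unique minimizer `x* ∈ (ℓ, u)`. -/
theorem stmt_7 (xL xR Δ : ℝ) (hΔ : 0 < Δ) (ℓ u : ℝ)
    (hℓ : ℓ = max (-Δ) xL) (hu : u = min Δ xR) (hℓu : ℓ < u)
    (Γ : ℝ → ℝ)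
    (hΓ : ∀ x, Γ x = -Real.log (x - xL) - Real.log (xR - x)
      - Real.log (Δ + x) - Real.log (Δ - x)) :
    (∀ x ∈ Set.Ioo ℓ u, 8 / (u - ℓ) ^ 2 ≤ deriv (deriv Γ) x) ∧
    StrictConvexOn ℝ (Set.Ioo ℓ u) Γ ∧
    (∃! xstar, xstar ∈ Set.Ioo ℓ u ∧ IsMinOn Γ (Set.Ioo ℓ u) xstar) := by
  have hΓfun : Γ = fun x => -Real.log (x - xL) - Real.log (xR - x)
      - Real.log (Δ + x) - Real.log (Δ - x) := funext hΓ
  subst hΓfun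
  have hxLℓ : xL ≤ ℓ := hℓ ▸ le_max_right _ _
  have hΔℓ : -Δ ≤ ℓ := hℓ ▸ le_max_left _ _
  have huxR : u ≤ xR := hu ▸ min_le_right _ _
  have huΔ : u ≤ Δ := hu ▸ min_le_left _ _
  set g : ℝ → ℝ := fun x => -(x - xL)⁻¹ + (xR - x)⁻¹ - (Δ + x)⁻¹ + (Δ - x)⁻¹ with hg
  set G : ℝ → ℝ := fun x =>
    ((x - xL) ^ 2)⁻¹ + ((xR - x) ^ 2)⁻¹ + ((Δ + x) ^ 2)⁻¹ + ((Δ - x) ^ 2)⁻¹ with hG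
  -- positivity facts
  have pos : ∀ x ∈ Ioo ℓ u, 0 < x - xL ∧ 0 < xR - x ∧ 0 < Δ + x ∧ 0 < Δ - x := by
    intro x hx
    refine ⟨by linarith [hx.1], by linarith [hx.2], by linarith [hx.1], by linarith [hx.2]⟩
  set Γ₀ : ℝ → ℝ := fun x => -Real.log (x - xL) - Real.log (xR - x)
      - Real.log (Δ + x) - Real.log (Δ - x) with hΓ₀
  have hd : ∀ x ∈ Ioo ℓ u, HasDerivAt Γ₀ (g x) x := by
    intro x hx
    obtain ⟨p1, p2, p3, p4⟩ := pos x hx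
    exact stmt7_hasDerivAt xL xR Δ x p1.ne' p2.ne' p3.ne' p4.ne'
  have hdg : ∀ x ∈ Ioo ℓ u, HasDerivAt g (G x) x := by
    intro x hx
    obtain ⟨p1, p2, p3, p4⟩ := pos x hx
    exact stmt7_hasDerivAt2 xL xR Δ x p1.ne' p2.ne' p3.ne' p4.ne'
  have hderivEq : ∀ x ∈ Ioo ℓ u, deriv Γ₀ x = g x := fun x hx => (hd x hx).deriv
  have hd2 : ∀ x ∈ Ioo ℓ u, HasDerivAt (deriv Γ₀) (G x) x := by
    intro x hx
    refine (hdg x hx).congr_of_eventuallyEq ?_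
    filter_upwards [isOpen_Ioo.mem_nhds hx] with y hy
    exact hderivEq y hy
  have hderiv2Eq : ∀ x ∈ Ioo ℓ u, deriv (deriv Γ₀) x = G x := fun x hx => (hd2 x hx).deriv
  have hGpos : ∀ x ∈ Ioo ℓ u, 0 < G x := by
    intro x hx
    obtain ⟨p1, p2, p3, p4⟩ := pos x hx
    have := p1.ne'
    positivity
  -- the main bound
  have hbound : ∀ x ∈ Ioo ℓ u, 8 / (u - ℓ) ^ 2 ≤ G x := by
    intro x hx
    obtain ⟨p1, p2, p3, p4⟩ := pos x hx
    have hA : 0 < x - ℓ := by linarith [hx.1]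
    have hB : 0 < u - x := by linarith [hx.2]
    have hA' : ((x - ℓ) ^ 2)⁻¹ ≤ ((x - xL) ^ 2)⁻¹ + ((Δ + x) ^ 2)⁻¹ := by
      rcases max_choice (-Δ) xL with h | h
      · have : x - ℓ = Δ + x := by rw [hℓ, h]; ring
        rw [this]
        have : (0:ℝ) ≤ ((x - xL) ^ 2)⁻¹ := by positivity
        linarith
      · have : x - ℓ = x - xL := by rw [hℓ, h]
        rw [this]
        have : (0:ℝ) ≤ ((Δ + x) ^ 2)⁻¹ := by positivity
        linarith
    have hB' : ((u - x) ^ 2)⁻¹ ≤ ((xR - x) ^ 2)⁻¹ + ((Δ - x) ^ 2)⁻¹ := by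
      rcases min_choice Δ xR with h | h
      · have : u - x = Δ - x := by rw [hu, h]
        rw [this]
        have : (0:ℝ) ≤ ((xR - x) ^ 2)⁻¹ := by positivity
        linarith
      · have : u - x = xR - x := by rw [hu, h]
        rw [this]
        have : (0:ℝ) ≤ ((Δ + x) ^ 2)⁻¹ := by positivity
        have h' : (0:ℝ) ≤ ((Δ - x) ^ 2)⁻¹ := by positivity
        linarith
    have key : 8 / (u - ℓ) ^ 2 ≤ ((x - ℓ) ^ 2)⁻¹ + ((u - x) ^ 2)⁻¹ := by
      set A := x - ℓ
      set B := u - x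
      have hAB : u - ℓ = A + B := by ring
      rw [hAB]
      have hsum : ((A:ℝ) ^ 2)⁻¹ + (B ^ 2)⁻¹ = (A ^ 2 + B ^ 2) / (A ^ 2 * B ^ 2) := by
        field_simp
        ring
      rw [hsum, div_le_div_iff₀ (by positivity) (by positivity)]
      nlinarith [sq_nonneg (A - B), sq_nonneg (A + B), sq_nonneg (A*B), mul_pos hA hB,
        sq_nonneg (A^2 - B^2), mul_pos (mul_pos hA hB) (mul_pos hA hB)]
    calc 8 / (u - ℓ) ^ 2 ≤ ((x - ℓ) ^ 2)⁻¹ + ((u - x) ^ 2)⁻¹ := key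
      _ ≤ (((x - xL) ^ 2)⁻¹ + ((Δ + x) ^ 2)⁻¹) + (((xR - x) ^ 2)⁻¹ + ((Δ - x) ^ 2)⁻¹) := by
          linarith
      _ = G x := by rw [hG]; ring
  have hcont : ContinuousOn Γ₀ (Ioo ℓ u) := fun x hx =>
    (hd x hx).continuousAt.continuousWithinAt
  have hconv : StrictConvexOn ℝ (Ioo ℓ u) Γ₀ := by
    refine strictConvexOn_of_deriv2_pos (convex_Ioo ℓ u) hcont ?_
    intro x hx
    rw [interior_Ioo] at hx
    have : deriv^[2] Γ₀ x = deriv (deriv Γ₀) x := by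
      simp [Function.iterate_succ, Function.comp]
    rw [this, hderiv2Eq x hx]
    exact hGpos x hx
  refine ⟨fun x hx => (hderiv2Eq x hx) ▸ hbound x hx, hconv, ?_⟩
  -- existence of critical point via IVT
  set d := (u - ℓ) / 4 with hdd
  have hdpos : 0 < d := by rw [hdd]; linarith
  set a := ℓ + d with ha
  set b := u - d with hb
  have hab : a < b := by rw [ha, hb, hdd]; linarith
  have haI : a ∈ Ioo ℓ u := ⟨by linarith, by rw [ha, hdd]; linarith⟩
  have hbI : b ∈ Ioo ℓ u := ⟨by rw [hb, hdd]; linarith, by linarith⟩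
  have hIccsub : Icc a b ⊆ Ioo ℓ u := fun y hy =>
    ⟨lt_of_lt_of_le haI.1 hy.1, lt_of_le_of_lt hy.2 hbI.2⟩
  -- g a < 0
  have hga : g a < 0 := by
    obtain ⟨p1, p2, p3, p4⟩ := pos a haI
    have h1 : (xR - a)⁻¹ ≤ (u - a)⁻¹ := by
      apply inv_anti₀ (by linarith [haI.2]) (by linarith)
    have h2 : (Δ - a)⁻¹ ≤ (u - a)⁻¹ := by
      apply inv_anti₀ (by linarith [haI.2]) (by linarith)
    have hneg : -(a - xL)⁻¹ - (Δ + a)⁻¹ ≤ -(a - ℓ)⁻¹ := by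
      rcases max_choice (-Δ) xL with h | h
      · have he : a - ℓ = Δ + a := by rw [hℓ, h]; ring
        rw [he]
        have : (0:ℝ) < (a - xL)⁻¹ := by positivity
        linarith
      · have he : a - ℓ = a - xL := by rw [hℓ, h]
        rw [he]
        have : (0:ℝ) < (Δ + a)⁻¹ := by positivity
        linarith
    have haℓ : a - ℓ = d := by rw [ha]; ring
    have hua : u - a = 3 * d := by rw [ha, hdd]; ring
    have : g a ≤ -(a - ℓ)⁻¹ + (u - a)⁻¹ + (u - a)⁻¹ := by
      rw [hg]; dsimp only; linarith
    rw [haℓ, hua] at this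
    have h3 : (3 * d)⁻¹ = 3⁻¹ * d⁻¹ := by rw [mul_inv]
    rw [h3] at this
    have hdi : 0 < d⁻¹ := by positivity
    have h4 : -d⁻¹ + 3⁻¹ * d⁻¹ + 3⁻¹ * d⁻¹ = -(d⁻¹ / 3) := by ring
    have h5 : g a ≤ -(d⁻¹ / 3) := h4 ▸ this
    exact lt_of_le_of_lt h5 (by linarith)
  -- 0 < g b
  have hgb : 0 < g b := by
    obtain ⟨p1, p2, p3, p4⟩ := pos b hbI
    have h1 : (b - xL)⁻¹ ≤ (b - ℓ)⁻¹ := by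
      apply inv_anti₀ (by linarith [hbI.1]) (by linarith)
    have h2 : (Δ + b)⁻¹ ≤ (b - ℓ)⁻¹ := by
      apply inv_anti₀ (by linarith [hbI.1]) (by linarith)
    have hposp : (u - b)⁻¹ ≤ (xR - b)⁻¹ + (Δ - b)⁻¹ := by
      rcases min_choice Δ xR with h | h
      · have he : u - b = Δ - b := by rw [hu, h]
        rw [he]
        have : (0:ℝ) < (xR - b)⁻¹ := by positivity
        linarith
      · have he : u - b = xR - b := by rw [hu, h]
        rw [he]
        have : (0:ℝ) < (Δ - b)⁻¹ := by positivity
        linarith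
    have hub : u - b = d := by rw [hb]; ring
    have hbℓ : b - ℓ = 3 * d := by rw [hb, hdd]; ring
    have : -(b - ℓ)⁻¹ - (b - ℓ)⁻¹ + (u - b)⁻¹ ≤ g b := by
      rw [hg]; dsimp only; linarith
    rw [hub, hbℓ] at this
    have h3 : (3 * d)⁻¹ = 3⁻¹ * d⁻¹ := by rw [mul_inv]
    rw [h3] at this
    have hdi : 0 < d⁻¹ := by positivity
    have h4 : -(3⁻¹ * d⁻¹) - 3⁻¹ * d⁻¹ + d⁻¹ = d⁻¹ / 3 := by ring
    have h5 : d⁻¹ / 3 ≤ g b := h4 ▸ this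
    exact lt_of_lt_of_le (by linarith) h5
  have hgcont : ContinuousOn g (Icc a b) := fun y hy =>
    (hdg y (hIccsub hy)).continuousAt.continuousWithinAt
  obtain ⟨c, hcmem, hgc⟩ : ∃ c ∈ Icc a b, g c = 0 := by
    have := intermediate_value_Icc hab.le hgcont
    have h0 : (0:ℝ) ∈ Icc (g a) (g b) := ⟨hga.le, hgb.le⟩
    obtain ⟨c, hc, hc0⟩ := this h0
    exact ⟨c, hc, hc0⟩
  have hcI : c ∈ Ioo ℓ u := hIccsub hcmem
  -- g strictly monotone on Ioo ℓ u
  have hgmono : StrictMonoOn g (Ioo ℓ u) := by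
    refine strictMonoOn_of_deriv_pos (convex_Ioo ℓ u)
      (fun y hy => (hdg y hy).continuousAt.continuousWithinAt) ?_
    intro y hy
    rw [interior_Ioo] at hy
    rw [(hdg y hy).deriv]
    exact hGpos y hy
  -- Γ₀ strictly decreasing before c, increasing after
  have hmin : IsMinOn Γ₀ (Ioo ℓ u) c := by
    have hmono : StrictMonoOn Γ₀ (Ico c u) := by
      refine strictMonoOn_of_deriv_pos (convex_Ico c u)
        (fun y hy => hcont.mono (fun z hz => ⟨lt_of_lt_of_le hcI.1 hz.1, hz.2⟩) y hy) ?_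
      intro y hy
      rw [interior_Ico] at hy
      have hyI : y ∈ Ioo ℓ u := ⟨lt_trans hcI.1 hy.1, hy.2⟩
      rw [hderivEq y hyI]
      have := hgmono hcI hyI hy.1
      rw [hgc] at this
      linarith
    have hanti : StrictAntiOn Γ₀ (Ioc ℓ c) := by
      refine strictAntiOn_of_deriv_neg (convex_Ioc ℓ c)
        (fun y hy => hcont.mono (fun z hz => ⟨hz.1, lt_of_le_of_lt hz.2 hcI.2⟩) y hy) ?_
      intro y hy
      rw [interior_Ioc] at hy
      have hyI : y ∈ Ioo ℓ u := ⟨hy.1, lt_trans hy.2 hcI.2⟩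
      rw [hderivEq y hyI]
      have := hgmono hyI hcI hy.2
      rw [hgc] at this
      linarith
    rw [isMinOn_iff]
    intro y hy
    rcases lt_trichotomy y c with h | h | h
    · exact (hanti ⟨hy.1, h.le⟩ ⟨hcI.1, le_refl c⟩ h).le
    · rw [h]
    · exact (hmono ⟨le_refl c, hcI.2⟩ ⟨h.le, hy.2⟩ h).le
  refine ⟨c, ⟨hcI, hmin⟩, ?_⟩
  rintro y ⟨hyI, hymin⟩
  by_contra hne
  have heq : Γ₀ y = Γ₀ c :=
    le_antisymm (isMinOn_iff.mp hymin c hcI) (isMinOn_iff.mp hmin y hyI)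
  have hmid : (1/2 : ℝ) • y + (1/2 : ℝ) • c ∈ Ioo ℓ u :=
    (convex_Ioo ℓ u) hyI hcI (by norm_num) (by norm_num) (by norm_num)
  have := hconv.2 hyI hcI hne (by norm_num : (0:ℝ) < 1/2) (by norm_num : (0:ℝ) < 1/2)
    (by norm_num)
  rw [heq] at this
  have h2 : (1/2 : ℝ) • Γ₀ c + (1/2 : ℝ) • Γ₀ c = Γ₀ c := by
    simp only [smul_eq_mul]; ring
  rw [h2] at this
  have hge := isMinOn_iff.mp hmin _ hmid
  exact absurd hge (not_le.mpr this)
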